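/- With Δ as above and Δ(Σ,σ²) the same construction at parameters (Σ,σ²), the matrix M(Σ,σ²) = Δ(Σ,σ²)⁻¹ Δ₀ equals [[(Σ⁻¹Σ₀)⊗Iₙ, ((Σ⁻¹Σ₀⊗Iₙ) − (σ₀²/σ²) I_{nm}) Cᵀ],[0, (σ₀²/σ²) Iₙ]]. In particular M(Σ,σ²) = I_{n(m+1)} if and only if Σ = Σ₀ and σ² = σ₀². -/

import Mathlib

open Matrix
open scoped Kronecker

/-- The model error variance matrix at parameters `(Σ, σ²)`:
`Δ(Σ,σ²) = [[Σ⊗Iₙ, (Σ⊗Iₙ)Cᵀ],[C(Σ⊗Iₙ), C(Σ⊗Iₙ)Cᵀ + σ²Iₙ]]`. -/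
noncomputable def Delta {m n : ℕ} (C : Matrix (Fin n) (Fin m × Fin n) ℝ)
    (Sig : Matrix (Fin m) (Fin m) ℝ) (σsq : ℝ) :
    Matrix (Fin m × Fin n ⊕ Fin n) (Fin m × Fin n ⊕ Fin n) ℝ :=
  fromBlocks
    (Sig ⊗ₖ (1 : Matrix (Fin n) (Fin n) ℝ))
    ((Sig ⊗ₖ (1 : Matrix (Fin n) (Fin n) ℝ)) * Cᵀ)
    (C * (Sig ⊗ₖ (1 : Matrix (Fin n) (Fin n) ℝ)))
    (C * (Sig ⊗ₖ (1 : Matrix (Fin n) (Fin n) ℝ)) * Cᵀ + σsq • 1)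

/-- `M(Σ,σ²) = Δ(Σ,σ²)⁻¹ Δ₀` has the block upper-triangular form
`[[(Σ⁻¹Σ₀)⊗Iₙ, ((Σ⁻¹Σ₀⊗Iₙ) − (σ₀²/σ²)I)Cᵀ],[0, (σ₀²/σ²)Iₙ]]`, and it equals the
identity iff `Σ = Σ₀` and `σ² = σ₀²`: identification of the variance parameters. -/
theorem variance_identification {m n : ℕ} (hn : 0 < n)
    (Sig0 Sig : Matrix (Fin m) (Fin m) ℝ) (hSig0 : Sig0.PosDef) (hSig : Sig.PosDef)
    (C : Matrix (Fin n) (Fin m × Fin n) ℝ)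
    (σ0sq σsq : ℝ) (hσ0 : 0 < σ0sq) (hσ : 0 < σsq) :
    (Delta C Sig σsq)⁻¹ * Delta C Sig0 σ0sq =
        fromBlocks
          ((Sig⁻¹ * Sig0) ⊗ₖ (1 : Matrix (Fin n) (Fin n) ℝ))
          ((((Sig⁻¹ * Sig0) ⊗ₖ (1 : Matrix (Fin n) (Fin n) ℝ)) -
              (σ0sq / σsq) • 1) * Cᵀ)
          0 ((σ0sq / σsq) • 1) ∧
      ((Delta C Sig σsq)⁻¹ * Delta C Sig0 σ0sq = 1 ↔ Sig = Sig0 ∧ σsq = σ0sq) := by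
  have hdet : IsUnit Sig.det := hSig.det_pos.ne'.isUnit
  have hSS : Sig * Sig⁻¹ = 1 := mul_nonsing_inv _ hdet
  have hSS' : Sig⁻¹ * Sig = 1 := nonsing_inv_mul _ hdet
  obtain ⟨A, hA⟩ : ∃ X, X = Sig ⊗ₖ (1 : Matrix (Fin n) (Fin n) ℝ) := ⟨_, rfl⟩
  obtain ⟨A0, hA0⟩ : ∃ X, X = Sig0 ⊗ₖ (1 : Matrix (Fin n) (Fin n) ℝ) := ⟨_, rfl⟩
  obtain ⟨Ai, hAi⟩ : ∃ X, X = Sig⁻¹ ⊗ₖ (1 : Matrix (Fin n) (Fin n) ℝ) := ⟨_, rfl⟩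
  obtain ⟨P, hP⟩ : ∃ X, X = (Sig⁻¹ * Sig0) ⊗ₖ (1 : Matrix (Fin n) (Fin n) ℝ) := ⟨_, rfl⟩
  obtain ⟨T, hT⟩ : ∃ T : ℝ, T = σsq⁻¹ := ⟨_, rfl⟩
  obtain ⟨q, hq'⟩ : ∃ q : ℝ, q = σ0sq / σsq := ⟨_, rfl⟩
  have hAAi : A * Ai = 1 := by
    rw [hA, hAi, ← mul_kronecker_mul, hSS, one_mul, one_kronecker_one]
  have hTσ : T * σsq = 1 := by rw [hT]; exact inv_mul_cancel₀ hσ.ne'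
  have hCA : C * A * Ai = C := by rw [Matrix.mul_assoc, hAAi, Matrix.mul_one]
  have hAiA0 : Ai * A0 = P := by
    rw [hAi, hA0, hP, ← mul_kronecker_mul, one_mul]
  have hTσ0 : T * σ0sq = q := by rw [hT, hq']; ring
  have hDelta : Delta C Sig σsq =
      fromBlocks A (A * Cᵀ) (C * A) (C * A * Cᵀ + σsq • 1) := by rw [Delta, hA]
  have hDelta0 : Delta C Sig0 σ0sq =
      fromBlocks A0 (A0 * Cᵀ) (C * A0) (C * A0 * Cᵀ + σ0sq • 1) := by rw [Delta, hA0]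
  obtain ⟨E, hE⟩ : ∃ X, X = fromBlocks (Ai + T • (Cᵀ * C)) (-(T • Cᵀ)) (-(T • C))
      (T • (1 : Matrix (Fin n) (Fin n) ℝ)) := ⟨_, rfl⟩
  have hright : Delta C Sig σsq * E = 1 := by
    rw [hDelta, hE, fromBlocks_multiply, ← fromBlocks_one]
    refine fromBlocks_inj.mpr ⟨?_, ?_, ?_, ?_⟩
    · simp only [Matrix.mul_add, Matrix.mul_smul, Matrix.mul_neg, ← Matrix.mul_assoc, hAAi]
      module
    · simp only [Matrix.mul_smul, Matrix.mul_neg, Matrix.mul_one]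
      module
    · simp only [hT, Matrix.mul_add, Matrix.add_mul, Matrix.mul_smul, Matrix.smul_mul,
        Matrix.mul_neg, Matrix.neg_mul, Matrix.one_mul, smul_smul,
        ← Matrix.mul_assoc, hCA]
      match_scalars <;> field_simp <;> ring
    · simp only [hT, Matrix.add_mul, Matrix.mul_smul, Matrix.smul_mul, Matrix.mul_neg,
        Matrix.mul_one, Matrix.one_mul, smul_smul,
        ← Matrix.mul_assoc]
      match_scalars <;> field_simp <;> ring
  have hinv : (Delta C Sig σsq)⁻¹ = E := inv_eq_right_inv hright
  have hmain' : (Delta C Sig σsq)⁻¹ * Delta C Sig0 σ0sq =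
      fromBlocks P ((P - q • 1) * Cᵀ) 0 (q • 1) := by
    rw [hinv, hE, hDelta0, fromBlocks_multiply]
    refine fromBlocks_inj.mpr ⟨?_, ?_, ?_, ?_⟩
    · simp only [Matrix.add_mul, Matrix.smul_mul, Matrix.neg_mul, ← Matrix.mul_assoc, hAiA0]
      module
    · simp only [hT, hq', Matrix.mul_add, Matrix.add_mul, Matrix.smul_mul, Matrix.mul_smul,
        Matrix.neg_mul, Matrix.sub_mul, Matrix.mul_one, Matrix.one_mul, smul_smul,
        ← Matrix.mul_assoc, hAiA0]
      match_scalars <;> field_simp <;> ring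
    · simp only [Matrix.smul_mul, Matrix.neg_mul, Matrix.one_mul]
      module
    · simp only [hT, hq', Matrix.mul_add, Matrix.smul_mul, Matrix.mul_smul, Matrix.neg_mul,
        Matrix.one_mul, smul_smul, ← Matrix.mul_assoc]
      match_scalars <;> field_simp <;> ring
  have hmain : (Delta C Sig σsq)⁻¹ * Delta C Sig0 σ0sq =
      fromBlocks
        ((Sig⁻¹ * Sig0) ⊗ₖ (1 : Matrix (Fin n) (Fin n) ℝ))
        ((((Sig⁻¹ * Sig0) ⊗ₖ (1 : Matrix (Fin n) (Fin n) ℝ)) -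
            (σ0sq / σsq) • 1) * Cᵀ)
        0 ((σ0sq / σsq) • 1) := by rw [hmain', hP, hq']
  refine ⟨hmain, ?_⟩
  rw [hmain', ← fromBlocks_one]
  constructor
  · intro h
    obtain ⟨h11, -, -, h22⟩ := fromBlocks_inj.mp h
    have hq1 : q = 1 := by
      have := congrFun (congrFun h22 ⟨0, hn⟩) ⟨0, hn⟩
      simpa using this
    have hσeq : σsq = σ0sq := by
      rw [hq'] at hq1
      exact ((div_eq_one_iff_eq hσ.ne').mp hq1).symm
    have hX : Sig⁻¹ * Sig0 = 1 := by
      rw [hP] at h11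
      ext i j
      have := congrFun (congrFun h11 (i, ⟨0, hn⟩)) (j, ⟨0, hn⟩)
      simpa [Matrix.one_apply, Prod.ext_iff] using this
    have hs : Sig * (Sig⁻¹ * Sig0) = Sig0 := by
      rw [← Matrix.mul_assoc, hSS, Matrix.one_mul]
    rw [hX, Matrix.mul_one] at hs
    exact ⟨hs, hσeq⟩
  · rintro ⟨rfl, rfl⟩
    refine fromBlocks_inj.mpr ⟨?_, ?_, rfl, ?_⟩
    · rw [hP, hSS', one_kronecker_one]
    · rw [hP, hq', hSS', one_kronecker_one, div_self hσ.ne', one_smul, sub_self,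
        Matrix.zero_mul]
    · rw [hq', div_self hσ.ne', one_smul]
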